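/- The subgroup of SL(2,ℤ) generated by the matrices (0 −1; 1 0) and (1 2; 0 1) is exactly Θ, and Θ has index 3 in SL(2,ℤ). -/

import Mathlib

/-- The mod-2 condition defining the Theta group `Θ`: the entries of the matrix
are congruent mod 2 to `(1 0; 0 1)` or `(0 1; 1 0)`. -/
def ThetaMod2 (a b c d : ℤ) : Prop :=
  ((a : ZMod 2), (b : ZMod 2), (c : ZMod 2), (d : ZMod 2)) ∈
    ({(1, 0, 0, 1), (0, 1, 1, 0)} :
      Set (ZMod 2 × ZMod 2 × ZMod 2 × ZMod 2))

/-- Membership in `Θ` for an element of `SL(2,ℤ)`. -/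
def IsTheta (M : Matrix.SpecialLinearGroup (Fin 2) ℤ) : Prop :=
  ThetaMod2 (M.1 0 0) (M.1 0 1) (M.1 1 0) (M.1 1 1)

/-- The matrix `S = (0 -1; 1 0)` in `SL(2,ℤ)`. -/
def SmatE : Matrix.SpecialLinearGroup (Fin 2) ℤ :=
  ⟨!![0, -1; 1, 0], by norm_num [Matrix.det_fin_two_of]⟩

/-- The matrix `T = (1 2; 0 1)` in `SL(2,ℤ)`. -/
def TmatE : Matrix.SpecialLinearGroup (Fin 2) ℤ :=
  ⟨!![1, 2; 0, 1], by norm_num [Matrix.det_fin_two_of]⟩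

section ThetaAux

abbrev SL2Z' := Matrix.SpecialLinearGroup (Fin 2) ℤ
abbrev SL2F' := Matrix.SpecialLinearGroup (Fin 2) (ZMod 2)

def fmapTheta : SL2Z' →* SL2F' := Matrix.SpecialLinearGroup.map (Int.castRingHom (ZMod 2))

def sFTheta : SL2F' := ⟨!![0,1;1,0], by decide⟩

instance : DecidableEq SL2F' := fun a b =>
  decidable_of_iff (a.1 = b.1) Subtype.ext_iff.symm

lemma sF_sq : sFTheta * sFTheta = 1 := by decide

lemma sF_zsq : sFTheta ^ (2:ℤ) = 1 := by
  rw [show (2:ℤ) = ((2:ℕ):ℤ) from rfl, zpow_natCast, pow_two, sF_sq]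

lemma mem_zpowers_sF_iff {x : SL2F'} :
    x ∈ Subgroup.zpowers sFTheta ↔ x = 1 ∨ x = sFTheta := by
  constructor
  · rintro ⟨n, rfl⟩
    simp only
    rcases Int.even_or_odd n with ⟨m, hm⟩ | ⟨m, hm⟩
    · left
      rw [hm, ← two_mul, zpow_mul, sF_zsq, one_zpow]
    · right
      rw [hm, zpow_add, zpow_mul, sF_zsq, one_zpow, one_mul, zpow_one]
  · rintro (rfl | rfl)
    · exact one_mem _
    · exact Subgroup.mem_zpowers _

lemma fmap_coe (M : SL2Z') (i j : Fin 2) :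
    (fmapTheta M).1 i j = ((M.1 i j : ℤ) : ZMod 2) := by
  simp [fmapTheta, Matrix.SpecialLinearGroup.map_apply_coe]

lemma sl2f_eq_iff (x y : SL2F') :
    x = y ↔ (x.1 0 0 = y.1 0 0 ∧ x.1 0 1 = y.1 0 1 ∧ x.1 1 0 = y.1 1 0 ∧ x.1 1 1 = y.1 1 1) := by
  constructor
  · rintro rfl; exact ⟨rfl, rfl, rfl, rfl⟩
  · rintro ⟨h1, h2, h3, h4⟩
    apply Subtype.ext
    rw [Matrix.eta_fin_two x.1, Matrix.eta_fin_two y.1, h1, h2, h3, h4]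

lemma isTheta_iff' (M : SL2Z') : IsTheta M ↔ (fmapTheta M = 1 ∨ fmapTheta M = sFTheta) := by
  rw [sl2f_eq_iff (fmapTheta M) sFTheta]
  simp only [IsTheta, ThetaMod2, Set.mem_insert_iff, Set.mem_singleton_iff, Prod.mk.injEq,
    sl2f_eq_iff, fmap_coe, sFTheta, Matrix.SpecialLinearGroup.coe_one, Matrix.one_fin_two,
    Matrix.cons_val_zero, Matrix.cons_val_one, Matrix.head_cons, Matrix.head_fin_const]
  simp only [Matrix.of_apply, Matrix.cons_val', Matrix.cons_val_zero, Matrix.cons_val_one,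
    Matrix.empty_val', Matrix.cons_val_fin_one]

lemma isTheta_iff_mem (M : SL2Z') : IsTheta M ↔ fmapTheta M ∈ Subgroup.zpowers sFTheta := by
  rw [isTheta_iff', mem_zpowers_sF_iff]

lemma cast_zmod2_eq_zero_iff (x : ℤ) : (x : ZMod 2) = 0 ↔ x % 2 = 0 := by
  rw [ZMod.intCast_zmod_eq_zero_iff_dvd]
  omega

lemma cast_zmod2_eq_one_iff (x : ℤ) : (x : ZMod 2) = 1 ↔ x % 2 = 1 := by
  have : ((1:ℤ) : ZMod 2) = 1 := by norm_num
  rw [← this, ZMod.intCast_eq_intCast_iff]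
  unfold Int.ModEq
  omega

lemma isTheta_mod (M : SL2Z') : IsTheta M ↔
    ((M.1 0 0) % 2 = 1 ∧ (M.1 0 1) % 2 = 0 ∧ (M.1 1 0) % 2 = 0 ∧ (M.1 1 1) % 2 = 1) ∨
    ((M.1 0 0) % 2 = 0 ∧ (M.1 0 1) % 2 = 1 ∧ (M.1 1 0) % 2 = 1 ∧ (M.1 1 1) % 2 = 0) := by
  simp only [IsTheta, ThetaMod2, Set.mem_insert_iff, Set.mem_singleton_iff, Prod.mk.injEq,
    cast_zmod2_eq_zero_iff, cast_zmod2_eq_one_iff]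

lemma fmapS : fmapTheta SmatE = sFTheta := by
  rw [sl2f_eq_iff]
  refine ⟨?_, ?_, ?_, ?_⟩ <;> rw [fmap_coe] <;> norm_num <;> rfl

lemma fmapT : fmapTheta TmatE = 1 := by
  rw [sl2f_eq_iff]
  refine ⟨?_, ?_, ?_, ?_⟩ <;> rw [fmap_coe] <;> norm_num <;> rfl

lemma Tinv_coe : ((TmatE⁻¹ : SL2Z') : Matrix (Fin 2) (Fin 2) ℤ) = !![1,-2;0,1] := by
  rw [Matrix.SpecialLinearGroup.SL2_inv_expl]
  ext i j
  fin_cases i <;> fin_cases j <;> rfl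

lemma Tzpow (k : ℤ) :
    ((TmatE ^ k : SL2Z') : Matrix (Fin 2) (Fin 2) ℤ) = !![1, 2*k; 0, 1] := by
  induction k using Int.induction_on with
  | zero => simp [Matrix.one_fin_two]
  | succ n ih =>
      rw [zpow_add_one, Matrix.SpecialLinearGroup.coe_mul, ih,
        show (TmatE : Matrix (Fin 2) (Fin 2) ℤ) = !![1,2;0,1] from rfl, Matrix.mul_fin_two]
      norm_num
      ring
  | pred n ih =>
      rw [zpow_sub_one, Matrix.SpecialLinearGroup.coe_mul, ih, Tinv_coe, Matrix.mul_fin_two]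
      norm_num
      ring

lemma Ssq_coe : ((SmatE ^ 2 : SL2Z') : Matrix (Fin 2) (Fin 2) ℤ) = !![-1,0;0,-1] := by
  rw [pow_two, Matrix.SpecialLinearGroup.coe_mul,
    show (SmatE : Matrix (Fin 2) (Fin 2) ℤ) = !![0,-1;1,0] from rfl, Matrix.mul_fin_two]
  norm_num

lemma exists_k_pos (a c : ℤ) (hc : 0 < c) (hpar : a % 2 ≠ c % 2) :
    ∃ k : ℤ, (a + 2 * k * c).natAbs < c.natAbs := by
  set m := 2 * c with hmdef
  have hm0 : 0 < m := by omega
  set q := a / m with hq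
  set r := a % m with hrdef
  have hr : r = a - m * q := Int.emod_def a m
  have hr0 : 0 ≤ r := Int.emod_nonneg a (by omega)
  have hrm : r < m := Int.emod_lt_of_pos a hm0
  have key : a + 2 * (-q) * c = r := by rw [hr]; ring
  have key2 : a + 2 * (-q - 1) * c = r - m := by rw [hr, hmdef]; ring
  obtain ⟨p, hp⟩ : ∃ p, r = a + 2 * p := ⟨-q * c, by linarith [key, mul_assoc 2 (-q) c]⟩
  rcases lt_trichotomy r c with h | h | h
  · exact ⟨-q, by rw [key]; omega⟩
  · exfalso; omega
  · exact ⟨-q - 1, by rw [key2]; omega⟩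

lemma exists_k (a c : ℤ) (hc : c ≠ 0) (hpar : a % 2 ≠ c % 2) :
    ∃ k : ℤ, (a + 2 * k * c).natAbs < c.natAbs := by
  rcases hc.lt_or_gt with h | h
  · obtain ⟨k, hk⟩ := exists_k_pos a (-c) (by omega) (by omega)
    refine ⟨-k, ?_⟩
    rw [show a + 2 * -k * c = a + 2 * k * -c by ring]
    simpa using hk
  · exact exists_k_pos a c h hpar

abbrev Cgrp : Subgroup SL2Z' :=
  Subgroup.closure ({SmatE, TmatE} : Set SL2Z')

lemma S_mem : SmatE ∈ Cgrp := Subgroup.subset_closure (by simp)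
lemma T_mem : TmatE ∈ Cgrp := Subgroup.subset_closure (by simp)

lemma mem_C_of_isTheta : ∀ n : ℕ, ∀ M : SL2Z', (M.1 1 0).natAbs = n → IsTheta M → M ∈ Cgrp := by
  intro n
  induction n using Nat.strong_induction_on with
  | _ n ih =>
  intro M hn hM
  have hdet : M.1 0 0 * M.1 1 1 - M.1 0 1 * M.1 1 0 = 1 := by
    have := M.2
    rwa [Matrix.det_fin_two] at this
  set a := M.1 0 0 with ha
  set b := M.1 0 1 with hb
  set c := M.1 1 0 with hc
  set d := M.1 1 1 with hd
  have hMeta : (M : Matrix (Fin 2) (Fin 2) ℤ) = !![a, b; c, d] := Matrix.eta_fin_two M.1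
  by_cases hc0 : c = 0
  · -- upper triangular case
    have had : a * d = 1 := by rw [hc0] at hdet; linarith
    have hmod := (isTheta_mod M).mp hM
    rw [← ha, ← hb, ← hc, ← hd] at hmod
    have hb2 : b % 2 = 0 := by rcases hmod with ⟨_, h, _, _⟩ | ⟨_, _, h, _⟩ <;> omega
    rcases Int.mul_eq_one_iff_eq_one_or_neg_one.mp had with ⟨ha1, hd1⟩ | ⟨ha1, hd1⟩
    · have hMeq : M = TmatE ^ (b / 2) := by
        apply Subtype.ext
        rw [hMeta, Tzpow, ha1, hd1, hc0, show 2 * (b/2) = b from by omega]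
      rw [hMeq]
      exact zpow_mem T_mem _
    · have hMeq : M = SmatE ^ 2 * TmatE ^ (-(b / 2)) := by
        apply Subtype.ext
        rw [hMeta, Matrix.SpecialLinearGroup.coe_mul, Ssq_coe, Tzpow, Matrix.mul_fin_two,
          ha1, hd1, hc0]
        norm_num
        rw [show (2:ℤ) * (b/2) = b from by omega]
      rw [hMeq]
      exact mul_mem (pow_mem S_mem 2) (zpow_mem T_mem _)
  · -- reduction step
    have hpar : a % 2 ≠ c % 2 := by
      have hmod := (isTheta_mod M).mp hM
      rw [← ha, ← hc] at hmod
      rcases hmod with ⟨h1, _, h2, _⟩ | ⟨h1, _, h2, _⟩ <;> omega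
    obtain ⟨k, hk⟩ := exists_k a c hc0 hpar
    set M' := SmatE * (TmatE ^ k * M) with hM'def
    have hM'mat : (M' : Matrix (Fin 2) (Fin 2) ℤ) =
        !![-c, -d; a + 2*k*c, b + 2*k*d] := by
      rw [hM'def, Matrix.SpecialLinearGroup.coe_mul, Matrix.SpecialLinearGroup.coe_mul,
        Tzpow, hMeta, show (SmatE : Matrix (Fin 2) (Fin 2) ℤ) = !![0,-1;1,0] from rfl,
        Matrix.mul_fin_two, Matrix.mul_fin_two]
      norm_num
    have h10 : M'.1 1 0 = a + 2*k*c := by rw [hM'mat]; rfl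
    have hlt : (M'.1 1 0).natAbs < n := by
      rw [h10]
      omega
    have hM'theta : IsTheta M' := by
      rw [isTheta_iff'] at hM ⊢
      have hfm : fmapTheta M' = sFTheta * fmapTheta M := by
        rw [hM'def, map_mul, map_mul, map_zpow, fmapS, fmapT, one_zpow, one_mul]
      rcases hM with h | h
      · right; rw [hfm, h, mul_one]
      · left; rw [hfm, h, sF_sq]
    have hmem' : M' ∈ Cgrp := ih _ hlt M' rfl hM'theta
    have hMrec : M = (TmatE ^ k)⁻¹ * (SmatE⁻¹ * M') := by
      rw [hM'def]
      group
    rw [hMrec]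
    exact mul_mem (inv_mem (zpow_mem T_mem _)) (mul_mem (inv_mem S_mem) hmem')

lemma C_eq_comap : Cgrp = (Subgroup.zpowers sFTheta).comap fmapTheta := by
  apply le_antisymm
  · rw [Subgroup.closure_le]
    rintro x (rfl | rfl)
    · exact (isTheta_iff_mem _).mp ((isTheta_iff' _).mpr (Or.inr fmapS))
    · exact (isTheta_iff_mem _).mp ((isTheta_iff' _).mpr (Or.inl fmapT))
  · intro M hMem
    exact mem_C_of_isTheta _ M rfl ((isTheta_iff_mem M).mpr hMem)

def mkZTheta (a b c d : ℤ) (h : a * d - b * c = 1) : SL2Z' :=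
  ⟨!![a, b; c, d], by simp [Matrix.det_fin_two_of, h]⟩

def mkFTheta (a b c d : ZMod 2) (h : a * d - b * c = 1) : SL2F' :=
  ⟨!![a, b; c, d], by simp [Matrix.det_fin_two_of, h]⟩

lemma fmap_surj : Function.Surjective fmapTheta := by
  have hcases : ∀ y : SL2F',
      y = mkFTheta 1 0 0 1 (by decide) ∨ y = mkFTheta 0 1 1 0 (by decide) ∨
      y = mkFTheta 1 1 0 1 (by decide) ∨ y = mkFTheta 1 0 1 1 (by decide) ∨
      y = mkFTheta 0 1 1 1 (by decide) ∨ y = mkFTheta 1 1 1 0 (by decide) := by decide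
  have key : ∀ (a b c d : ℤ) (h : a * d - b * c = 1) (a' b' c' d' : ZMod 2)
      (h' : a' * d' - b' * c' = 1), (a : ZMod 2) = a' → (b : ZMod 2) = b' →
      (c : ZMod 2) = c' → (d : ZMod 2) = d' →
      fmapTheta (mkZTheta a b c d h) = mkFTheta a' b' c' d' h' := by
    intro a b c d h a' b' c' d' h' h1 h2 h3 h4
    rw [sl2f_eq_iff]
    refine ⟨?_, ?_, ?_, ?_⟩ <;> rw [fmap_coe] <;>
      [exact h1; exact h2; exact h3; exact h4]
  intro y
  rcases hcases y with h | h | h | h | h | h <;> subst h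
  · exact ⟨mkZTheta 1 0 0 1 (by norm_num), key _ _ _ _ _ _ _ _ _ _ (by norm_num) (by norm_num) (by norm_num) (by norm_num)⟩
  · exact ⟨mkZTheta 0 (-1) 1 0 (by norm_num), key _ _ _ _ _ _ _ _ _ _ (by norm_num) (by norm_num; decide) (by norm_num) (by norm_num)⟩
  · exact ⟨mkZTheta 1 1 0 1 (by norm_num), key _ _ _ _ _ _ _ _ _ _ (by norm_num) (by norm_num) (by norm_num) (by norm_num)⟩
  · exact ⟨mkZTheta 1 0 1 1 (by norm_num), key _ _ _ _ _ _ _ _ _ _ (by norm_num) (by norm_num) (by norm_num) (by norm_num)⟩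
  · exact ⟨mkZTheta 0 (-1) 1 1 (by norm_num), key _ _ _ _ _ _ _ _ _ _ (by norm_num) (by norm_num; decide) (by norm_num) (by norm_num)⟩
  · exact ⟨mkZTheta 1 (-1) 1 0 (by norm_num), key _ _ _ _ _ _ _ _ _ _ (by norm_num) (by norm_num; decide) (by norm_num) (by norm_num)⟩

lemma index_three : Cgrp.index = 3 := by
  rw [C_eq_comap, Subgroup.index_comap_of_surjective _ fmap_surj]
  have hcard : Nat.card SL2F' = 6 := by
    rw [Nat.card_eq_fintype_card]; decide
  have horder : orderOf sFTheta = 2 := by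
    apply orderOf_eq_prime
    · rw [pow_two]; exact sF_sq
    · decide
  have hzp : Nat.card (Subgroup.zpowers sFTheta) = 2 := by
    rw [Nat.card_zpowers, horder]
  have := Subgroup.card_mul_index (Subgroup.zpowers sFTheta)
  rw [hzp, hcard] at this
  omega

end ThetaAux

/-- The subgroup of `SL(2,ℤ)` generated by `(0 −1; 1 0)` and `(1 2; 0 1)` is
exactly the Theta group `Θ`, and `Θ` has index `3` in `SL(2,ℤ)`. -/
theorem generated_eq_Theta_and_index_three :
    (∀ M : Matrix.SpecialLinearGroup (Fin 2) ℤ,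
      M ∈ Subgroup.closure ({SmatE, TmatE} :
        Set (Matrix.SpecialLinearGroup (Fin 2) ℤ)) ↔ IsTheta M) ∧
    (Subgroup.closure ({SmatE, TmatE} :
        Set (Matrix.SpecialLinearGroup (Fin 2) ℤ))).index = 3 := by
  constructor
  · intro M
    rw [show Subgroup.closure ({SmatE, TmatE} :
        Set (Matrix.SpecialLinearGroup (Fin 2) ℤ)) = Cgrp from rfl, C_eq_comap,
      isTheta_iff_mem]
    rfl
  · exact index_three
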